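/- Conditional Expected Drawdown is convex in the return path: for random vectors X, Y in ℝ^n with integrable maximum drawdowns and λ ∈ [0,1], CED_α(λX + (1−λ)Y) ≤ λ·CED_α(X) + (1−λ)·CED_α(Y). -/

import Mathlib

open MeasureTheory

/-- Drawdown at time `j` of the cumulative return path `x`:
`d_j(x) = max_{i ≤ j} x_i − x_j`. -/
noncomputable def dd {n : ℕ} (x : Fin n → ℝ) (j : Fin n) : ℝ :=
  (Finset.Iic j).sup' ⟨j, Finset.mem_Iic.mpr le_rfl⟩ x - x j

/-- Maximum drawdown of the path `x`:
`μ(x) = max_{i < j} max{x_j − x_i, 0}` (with value `0` if there are no pairs). -/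
noncomputable def mdd {n : ℕ} (x : Fin n → ℝ) : ℝ :=
  sSup {y | y = 0 ∨ ∃ i j : Fin n, i < j ∧ y = max (x j - x i) 0}

/-- Lower `θ`-quantile of a real random variable `X` under `P`. -/
noncomputable def lowerQuantile {Ω : Type*} [MeasurableSpace Ω] (P : Measure Ω)
    (X : Ω → ℝ) (θ : ℝ) : ℝ :=
  sInf {x : ℝ | θ ≤ (P {ω | X ω ≤ x}).toReal}

/-- `α`-tail mean: `TM_α(X) = (1/(1−α)) ∫_α^1 q_θ(X) dθ`. -/
noncomputable def tailMean {Ω : Type*} [MeasurableSpace Ω] (P : Measure Ω)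
    (X : Ω → ℝ) (α : ℝ) : ℝ :=
  (1 - α)⁻¹ * ∫ θ in α..1, lowerQuantile P X θ

/-- Conditional Expected Drawdown: tail mean of the maximum drawdown distribution. -/
noncomputable def CED {Ω : Type*} [MeasurableSpace Ω] (P : Measure Ω)
    {n : ℕ} (X : Ω → Fin n → ℝ) (α : ℝ) : ℝ :=
  tailMean P (fun ω => mdd (X ω)) α

open Set Filter Topology

section MddLemmas

lemma max_convex {u v l : ℝ} (h0 : 0 ≤ l) (h1 : l ≤ 1) :
    max (l * u + (1 - l) * v) 0 ≤ l * max u 0 + (1 - l) * max v 0 := by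
  have h0' : (0:ℝ) ≤ 1 - l := by linarith
  calc max (l * u + (1 - l) * v) 0
      ≤ max (l * u) 0 + max ((1 - l) * v) 0 := by
        apply max_le
        · exact add_le_add (le_max_left _ _) (le_max_left _ _)
        · positivity
    _ = l * max u 0 + (1 - l) * max v 0 := by
        rw [mul_max_of_nonneg _ _ h0, mul_max_of_nonneg _ _ h0', mul_zero, mul_zero]

lemma mdd_bddAbove {n : ℕ} (x : Fin n → ℝ) :
    BddAbove {y | y = 0 ∨ ∃ i j : Fin n, i < j ∧ y = max (x j - x i) 0} := by
  apply Set.Finite.bddAbove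
  have : {y | y = 0 ∨ ∃ i j : Fin n, i < j ∧ y = max (x j - x i) 0} ⊆
      insert 0 ((fun p : Fin n × Fin n => max (x p.2 - x p.1) 0) '' Set.univ) := by
    rintro y (rfl | ⟨i, j, _, rfl⟩)
    · exact Set.mem_insert _ _
    · exact Set.mem_insert_of_mem _ ⟨(i, j), Set.mem_univ _, rfl⟩
  exact Set.Finite.subset ((Set.finite_univ.image _).insert 0) this

lemma mdd_nonneg {n : ℕ} (x : Fin n → ℝ) : 0 ≤ mdd x :=
  le_csSup (mdd_bddAbove x) (Or.inl rfl)

lemma le_mdd {n : ℕ} (x : Fin n → ℝ) {i j : Fin n} (h : i < j) :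
    max (x j - x i) 0 ≤ mdd x :=
  le_csSup (mdd_bddAbove x) (Or.inr ⟨i, j, h, rfl⟩)

lemma mdd_convex {n : ℕ} (x y : Fin n → ℝ) {l : ℝ} (h0 : 0 ≤ l) (h1 : l ≤ 1) :
    mdd (l • x + (1 - l) • y) ≤ l * mdd x + (1 - l) * mdd y := by
  have h0' : (0:ℝ) ≤ 1 - l := by linarith
  refine csSup_le ⟨(0:ℝ), Or.inl rfl⟩ ?_
  rintro w (rfl | ⟨i, j, hij, rfl⟩)
  · have := mdd_nonneg x; have := mdd_nonneg y; positivity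
  · have hz : (l • x + (1 - l) • y) j - (l • x + (1 - l) • y) i
        = l * (x j - x i) + (1 - l) * (y j - y i) := by
      simp [Pi.add_apply, Pi.smul_apply, smul_eq_mul]; ring
    rw [hz]
    refine le_trans (max_convex h0 h1) ?_
    exact add_le_add (mul_le_mul_of_nonneg_left (le_mdd x hij) h0)
      (mul_le_mul_of_nonneg_left (le_mdd y hij) h0')

end MddLemmas

section Quantile

variable {Ω : Type*} [MeasurableSpace Ω] {P : Measure Ω} [IsProbabilityMeasure P]

lemma cdfR_mono (Z : Ω → ℝ) : Monotone (fun x => (P {ω | Z ω ≤ x}).toReal) :=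
  fun x y h => ENNReal.toReal_mono (measure_ne_top P _)
    (measure_mono fun ω hω => le_trans hω h)

omit [IsProbabilityMeasure P] in
lemma mem_qset_nonneg {Z : Ω → ℝ} (hZ0 : ∀ ω, 0 ≤ Z ω) {θ x : ℝ} (hθ : 0 < θ)
    (hx : θ ≤ (P {ω | Z ω ≤ x}).toReal) : 0 ≤ x := by
  by_contra h
  push_neg at h
  have he : {ω | Z ω ≤ x} = ∅ := by
    ext ω; simp only [Set.mem_setOf_eq, Set.mem_empty_iff_false, iff_false, not_le]
    exact lt_of_lt_of_le h (hZ0 ω)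
  rw [he] at hx
  simp at hx
  linarith

omit [IsProbabilityMeasure P] in
lemma qset_bddBelow {Z : Ω → ℝ} (hZ0 : ∀ ω, 0 ≤ Z ω) {θ : ℝ} (hθ : 0 < θ) :
    BddBelow {x : ℝ | θ ≤ (P {ω | Z ω ≤ x}).toReal} :=
  ⟨0, fun _ hx => mem_qset_nonneg hZ0 hθ hx⟩

omit [IsProbabilityMeasure P] in
lemma quantile_nonneg {Z : Ω → ℝ} (hZ0 : ∀ ω, 0 ≤ Z ω) {θ : ℝ} (hθ : 0 < θ) :
    0 ≤ lowerQuantile P Z θ :=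
  Real.sInf_nonneg (fun _ hx => mem_qset_nonneg hZ0 hθ hx)

lemma qset_nonempty (Z : Ω → ℝ) {θ : ℝ} (hθ : θ < 1) :
    {x : ℝ | θ ≤ (P {ω | Z ω ≤ x}).toReal}.Nonempty := by
  have hmono : Monotone (fun n : ℕ => {ω | Z ω ≤ (n : ℝ)}) := by
    intro a b hab ω hω
    simp only [Set.mem_setOf_eq] at hω ⊢
    exact le_trans hω (by exact_mod_cast hab)
  have hU : (⋃ n : ℕ, {ω | Z ω ≤ (n : ℝ)}) = Set.univ := by
    ext ω
    simp only [Set.mem_iUnion, Set.mem_setOf_eq, Set.mem_univ, iff_true]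
    exact exists_nat_ge (Z ω)
  have h1 := tendsto_measure_iUnion_atTop (μ := P) hmono
  rw [hU, measure_univ] at h1
  have h2 : Tendsto (fun n : ℕ => (P {ω | Z ω ≤ (n : ℝ)}).toReal) atTop (𝓝 (1:ℝ)) := by
    have := (ENNReal.tendsto_toReal (by simp)).comp h1
    simpa [Function.comp_def] using this
  obtain ⟨n, hn⟩ := (h2.eventually (eventually_ge_nhds hθ)).exists
  exact ⟨n, hn⟩

lemma quantile_mono_comp {Z W : Ω → ℝ} (hZ0 : ∀ ω, 0 ≤ Z ω)
    (hF : ∀ x, (P {ω | W ω ≤ x}).toReal ≤ (P {ω | Z ω ≤ x}).toReal)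
    {θ : ℝ} (hθ0 : 0 < θ) (hθ1 : θ < 1) :
    lowerQuantile P Z θ ≤ lowerQuantile P W θ := by
  apply csInf_le_csInf (qset_bddBelow hZ0 hθ0) (qset_nonempty W hθ1)
  intro x hx
  exact le_trans hx (hF x)

lemma quantile_mono {Z : Ω → ℝ} (hZ0 : ∀ ω, 0 ≤ Z ω) {θ₁ θ₂ : ℝ}
    (h0 : 0 < θ₁) (h12 : θ₁ ≤ θ₂) (h1 : θ₂ < 1) :
    lowerQuantile P Z θ₁ ≤ lowerQuantile P Z θ₂ := by
  apply csInf_le_csInf (qset_bddBelow hZ0 h0) (qset_nonempty Z h1)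
  intro x hx
  exact le_trans h12 hx

lemma le_cdf_quantile {Z : Ω → ℝ} (hm : Measurable Z) {θ : ℝ}
    (hθ0 : 0 < θ) (hθ1 : θ < 1) :
    θ ≤ (P {ω | Z ω ≤ lowerQuantile P Z θ}).toReal := by
  set q := lowerQuantile P Z θ with hq
  have hstep : ∀ n : ℕ, θ ≤ (P {ω | Z ω ≤ q + 1 / (n + 1)}).toReal := by
    intro n
    have hpos : (0:ℝ) < 1 / (n + 1) := by positivity
    obtain ⟨y, hy, hlt⟩ := Real.lt_sInf_add_pos (qset_nonempty (P := P) Z hθ1) hpos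
    exact le_trans hy (cdfR_mono Z hlt.le)
  have hanti : Antitone (fun n : ℕ => {ω | Z ω ≤ q + 1 / (n + 1)}) := by
    intro a b hab ω hω
    simp only [Set.mem_setOf_eq] at hω ⊢
    refine le_trans hω (add_le_add_right ?_ q)
    apply one_div_le_one_div_of_le (by positivity)
    have : (a:ℝ) ≤ b := Nat.cast_le.mpr hab
    linarith
  have hiInter : (⋂ n : ℕ, {ω | Z ω ≤ q + 1 / (n + 1)}) = {ω | Z ω ≤ q} := by
    ext ω
    simp only [Set.mem_iInter, Set.mem_setOf_eq]
    constructor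
    · intro h
      have ht : Tendsto (fun n : ℕ => q + 1 / ((n:ℝ) + 1)) atTop (𝓝 q) := by
        have := tendsto_one_div_add_atTop_nhds_zero_nat (𝕜 := ℝ)
        simpa using (tendsto_const_nhds (x := q)).add this
      exact ge_of_tendsto ht (Eventually.of_forall h)
    · intro h n
      have hpos : (0:ℝ) < 1 / ((n:ℝ) + 1) := by positivity
      linarith
  have hlim := tendsto_measure_iInter_atTop (μ := P)
    (s := fun n : ℕ => {ω | Z ω ≤ q + 1 / (n + 1)})
    (fun n => (hm measurableSet_Iic).nullMeasurableSet) hanti ⟨0, measure_ne_top P _⟩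
  rw [hiInter] at hlim
  have hlim2 : Tendsto (fun n : ℕ => (P {ω | Z ω ≤ q + 1 / (n + 1)}).toReal) atTop
      (𝓝 ((P {ω | Z ω ≤ q}).toReal)) := by
    have := (ENNReal.tendsto_toReal (measure_ne_top P _)).comp hlim
    simpa [Function.comp_def] using this
  exact ge_of_tendsto hlim2 (Eventually.of_forall hstep)

lemma quantile_le_iff {Z : Ω → ℝ} (hm : Measurable Z) (hZ0 : ∀ ω, 0 ≤ Z ω) {θ x : ℝ}
    (hθ0 : 0 < θ) (hθ1 : θ < 1) :
    lowerQuantile P Z θ ≤ x ↔ θ ≤ (P {ω | Z ω ≤ x}).toReal := by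
  constructor
  · intro h
    exact le_trans (le_cdf_quantile hm hθ0 hθ1) (cdfR_mono Z h)
  · intro h
    exact csInf_le (qset_bddBelow hZ0 hθ0) h

omit [IsProbabilityMeasure P] in
lemma lowerQuantile_congr {Z W : Ω → ℝ} (h : Z =ᵐ[P] W) :
    lowerQuantile P Z = lowerQuantile P W := by
  funext θ
  unfold lowerQuantile
  congr 1
  ext x
  have hPP : P {ω | Z ω ≤ x} = P {ω | W ω ≤ x} := by
    apply measure_congr
    filter_upwards [h] with ω hω
    simp only [eq_iff_iff]
    show Z ω ≤ x ↔ W ω ≤ x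
    rw [hω]
  simp only [Set.mem_setOf_eq, hPP]

omit [IsProbabilityMeasure P] in
lemma quantile_monotoneOn {Z : Ω → ℝ} [IsProbabilityMeasure P] (hZ0 : ∀ ω, 0 ≤ Z ω) :
    MonotoneOn (lowerQuantile P Z) (Ioo (0:ℝ) 1) := fun _ ha _ hb hab =>
  quantile_mono hZ0 ha.1 hab hb.2

omit [IsProbabilityMeasure P] in
lemma quantile_aemeasurable {Z : Ω → ℝ} [IsProbabilityMeasure P] (hZ0 : ∀ ω, 0 ≤ Z ω) :
    AEMeasurable (lowerQuantile P Z) (volume.restrict (Ioo (0:ℝ) 1)) :=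
  aemeasurable_restrict_of_monotoneOn measurableSet_Ioo (quantile_monotoneOn hZ0)

lemma key_lintegral {Z : Ω → ℝ} (hm : Measurable Z) (hZ0 : ∀ ω, 0 ≤ Z ω) (c : ℝ) :
    ∫⁻ θ in Ioo (0:ℝ) 1, ENNReal.ofReal (max (lowerQuantile P Z θ - c) 0)
      = ∫⁻ ω, ENNReal.ofReal (max (Z ω - c) 0) ∂P := by
  set q := lowerQuantile P Z with hq
  have hgml : AEMeasurable (fun θ => max (q θ - c) 0) (volume.restrict (Ioo (0:ℝ) 1)) :=
    ((quantile_aemeasurable hZ0).sub aemeasurable_const).max aemeasurable_const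
  have L := lintegral_eq_lintegral_meas_lt (volume.restrict (Ioo (0:ℝ) 1))
    (f := fun θ => max (q θ - c) 0) (ae_of_all _ fun θ => le_max_right _ _) hgml
  have R := lintegral_eq_lintegral_meas_lt P (f := fun ω => max (Z ω - c) 0)
    (ae_of_all _ fun ω => le_max_right _ _)
    (((hm.sub measurable_const).max measurable_const).aemeasurable)
  rw [L, R]
  apply setLIntegral_congr_fun measurableSet_Ioi
  intro t ht
  beta_reduce
  have ht : 0 < t := ht
  have hset1 : {θ | t < max (q θ - c) 0} ∩ Ioo (0:ℝ) 1
      = Ioo ((P {ω | Z ω ≤ c + t}).toReal) 1 := by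
    ext θ
    simp only [Set.mem_inter_iff, Set.mem_setOf_eq, Set.mem_Ioo]
    constructor
    · rintro ⟨hlt, hθ0, hθ1⟩
      have h1 : t < q θ - c := by
        rcases lt_max_iff.mp hlt with h | h
        · exact h
        · linarith
      have h2 : ¬ q θ ≤ c + t := by linarith
      have h3 := (quantile_le_iff hm hZ0 hθ0 hθ1 (x := c + t)).not.mp h2
      push_neg at h3
      exact ⟨h3, hθ1⟩
    · rintro ⟨hF, hθ1⟩
      have hθ0 : 0 < θ := lt_of_le_of_lt ENNReal.toReal_nonneg hF
      have h2 : ¬ q θ ≤ c + t :=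
        fun h => absurd ((quantile_le_iff hm hZ0 hθ0 hθ1).mp h) (not_le.mpr hF)
      push_neg at h2
      exact ⟨lt_max_iff.mpr (Or.inl (by linarith)), hθ0, hθ1⟩
  have hset2 : {ω | t < max (Z ω - c) 0} = {ω | Z ω ≤ c + t}ᶜ := by
    ext ω
    simp only [Set.mem_setOf_eq, Set.mem_compl_iff, not_le]
    constructor
    · intro hlt
      rcases lt_max_iff.mp hlt with h | h
      · linarith
      · linarith
    · intro h
      exact lt_max_iff.mpr (Or.inl (by linarith))
  have hmeas : MeasurableSet {ω | Z ω ≤ c + t} := hm measurableSet_Iic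
  rw [Measure.restrict_apply' measurableSet_Ioo, hset1, hset2, Real.volume_Ioo,
    measure_compl (s := {ω | Z ω ≤ c + t}) hmeas (measure_ne_top P _), measure_univ]
  have hle : P {ω | Z ω ≤ c + t} ≤ 1 := prob_le_one
  rw [show (1:ℝ) - (P {ω | Z ω ≤ c + t}).toReal
      = ((1 : ENNReal) - P {ω | Z ω ≤ c + t}).toReal by
    rw [ENNReal.toReal_sub_of_le hle ENNReal.one_ne_top, ENNReal.toReal_one]]
  exact ENNReal.ofReal_toReal (by
    exact ne_top_of_le_ne_top ENNReal.one_ne_top (tsub_le_self.trans le_rfl))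

lemma g_integrable {Z : Ω → ℝ} (hm : Measurable Z) (hZ0 : ∀ ω, 0 ≤ Z ω)
    (hint : Integrable Z P) (c : ℝ) :
    Integrable (fun θ => max (lowerQuantile P Z θ - c) 0)
      (volume.restrict (Ioo (0:ℝ) 1)) := by
  constructor
  · exact (((quantile_aemeasurable hZ0).sub aemeasurable_const).max
      aemeasurable_const).aestronglyMeasurable
  · refine (hasFiniteIntegral_iff_ofReal
      (f := fun θ => max (lowerQuantile P Z θ - c) 0)
      (ae_of_all _ fun θ => le_max_right _ _)).mpr ?_
    rw [key_lintegral hm hZ0 c]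
    calc ∫⁻ ω, ENNReal.ofReal (max (Z ω - c) 0) ∂P
        ≤ ∫⁻ ω, ENNReal.ofReal (|Z ω| + |c|) ∂P := by
          refine lintegral_mono fun ω => ENNReal.ofReal_le_ofReal ?_
          apply max_le
          · have := abs_nonneg (Z ω); have := neg_abs_le c; have := le_abs_self (Z ω); linarith
          · positivity
      _ = ∫⁻ ω, (ENNReal.ofReal |Z ω| + ENNReal.ofReal |c|) ∂P :=
          lintegral_congr fun ω => ENNReal.ofReal_add (abs_nonneg _) (abs_nonneg _)
      _ = (∫⁻ ω, ENNReal.ofReal |Z ω| ∂P) + ENNReal.ofReal |c| * 1 := by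
          rw [lintegral_add_right _ measurable_const, lintegral_const, measure_univ]
      _ < ⊤ := by
          apply ENNReal.add_lt_top.mpr
          constructor
          · have h2 := hint.2
            rw [hasFiniteIntegral_iff_norm] at h2
            simpa [Real.norm_eq_abs] using h2
          · simpa using ENNReal.ofReal_lt_top (p := |c|)

lemma key_integral {Z : Ω → ℝ} (hm : Measurable Z) (hZ0 : ∀ ω, 0 ≤ Z ω)
    (hint : Integrable Z P) (c : ℝ) :
    ∫ θ in Ioo (0:ℝ) 1, max (lowerQuantile P Z θ - c) 0
      = ∫ ω, max (Z ω - c) 0 ∂P := by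
  rw [integral_eq_lintegral_of_nonneg_ae (f := fun θ => max (lowerQuantile P Z θ - c) 0)
      (ae_of_all _ fun θ => le_max_right _ _) (g_integrable hm hZ0 hint c).1,
    integral_eq_lintegral_of_nonneg_ae (f := fun ω => max (Z ω - c) 0)
      (ae_of_all _ fun ω => le_max_right _ _)
      ((hm.sub measurable_const).max measurable_const).aestronglyMeasurable,
    key_lintegral hm hZ0 c]

end Quantile

section Core

variable {Ω : Type*} [MeasurableSpace Ω] {P : Measure Ω} [IsProbabilityMeasure P]

lemma quantile_integrableOn {Z : Ω → ℝ} (hm : Measurable Z) (hZ0 : ∀ ω, 0 ≤ Z ω)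
    (hint : Integrable Z P) {α : ℝ} (hα : α ∈ Ioo (0:ℝ) 1) :
    IntegrableOn (lowerQuantile P Z) (Ioo α 1) volume := by
  have h1 : IntegrableOn (fun θ => max (lowerQuantile P Z θ - 0) 0) (Ioo α 1) volume :=
    (g_integrable hm hZ0 hint 0).mono_measure
      (Measure.restrict_mono (Ioo_subset_Ioo hα.1.le le_rfl) le_rfl)
  refine h1.congr ?_
  refine (ae_restrict_iff' measurableSet_Ioo).mpr (ae_of_all _ fun θ hθ => ?_)
  show max (lowerQuantile P Z θ - 0) 0 = lowerQuantile P Z θ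
  rw [sub_zero, max_eq_left (quantile_nonneg hZ0 (lt_trans hα.1 hθ.1))]

lemma quantile_upper {Z : Ω → ℝ} (hm : Measurable Z) (hZ0 : ∀ ω, 0 ≤ Z ω)
    (hint : Integrable Z P) {α : ℝ} (hα : α ∈ Ioo (0:ℝ) 1) (c : ℝ) :
    ∫ θ in Ioo α 1, lowerQuantile P Z θ ≤ (1 - α) * c + ∫ ω, max (Z ω - c) 0 ∂P := by
  haveI : IsFiniteMeasure (volume.restrict (Ioo α (1:ℝ))) := by
    constructor
    rw [Measure.restrict_apply_univ, Real.volume_Ioo]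
    exact ENNReal.ofReal_lt_top
  have hg : IntegrableOn (fun θ => max (lowerQuantile P Z θ - c) 0) (Ioo α 1) volume :=
    (g_integrable hm hZ0 hint c).mono_measure
      (Measure.restrict_mono (Ioo_subset_Ioo hα.1.le le_rfl) le_rfl)
  have step1 : ∫ θ in Ioo α 1, lowerQuantile P Z θ
      ≤ ∫ θ in Ioo α 1, (max (lowerQuantile P Z θ - c) 0 + c) := by
    refine integral_mono (quantile_integrableOn hm hZ0 hint hα)
      (hg.add (integrable_const c)) ?_
    intro θ
    have := le_max_left (lowerQuantile P Z θ - c) 0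
    show lowerQuantile P Z θ ≤ max (lowerQuantile P Z θ - c) 0 + c
    linarith
  have step2 : ∫ θ in Ioo α 1, (max (lowerQuantile P Z θ - c) 0 + c)
      = (∫ θ in Ioo α 1, max (lowerQuantile P Z θ - c) 0) + (1 - α) * c := by
    rw [integral_add hg (integrable_const c), setIntegral_const,
      Real.volume_real_Ioo_of_le (by linarith [hα.2] : α ≤ 1), smul_eq_mul]
  have step3 : ∫ θ in Ioo α 1, max (lowerQuantile P Z θ - c) 0
      ≤ ∫ θ in Ioo (0:ℝ) 1, max (lowerQuantile P Z θ - c) 0 := by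
    refine setIntegral_mono_set (g_integrable hm hZ0 hint c)
      (ae_of_all _ fun θ => le_max_right _ _) ?_
    exact HasSubset.Subset.eventuallyLE (Ioo_subset_Ioo hα.1.le le_rfl)
  rw [key_integral hm hZ0 hint c] at step3
  linarith

lemma quantile_lower {Z : Ω → ℝ} (hm : Measurable Z) (hZ0 : ∀ ω, 0 ≤ Z ω)
    (hint : Integrable Z P) {α : ℝ} (hα : α ∈ Ioo (0:ℝ) 1) :
    (1 - α) * lowerQuantile P Z α + ∫ ω, max (Z ω - lowerQuantile P Z α) 0 ∂P
      ≤ ∫ θ in Ioo α 1, lowerQuantile P Z θ := by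
  set c := lowerQuantile P Z α with hc
  have hgIoc : IntegrableOn (fun θ => max (lowerQuantile P Z θ - c) 0) (Ioc 0 α) volume :=
    (g_integrable hm hZ0 hint c).mono_measure
      (Measure.restrict_mono (show Ioc (0:ℝ) α ⊆ Ioo 0 1 from fun x hx => ⟨hx.1, lt_of_le_of_lt hx.2 hα.2⟩) le_rfl)
  have hgIoo : IntegrableOn (fun θ => max (lowerQuantile P Z θ - c) 0) (Ioo α 1) volume :=
    (g_integrable hm hZ0 hint c).mono_measure
      (Measure.restrict_mono (Ioo_subset_Ioo hα.1.le le_rfl) le_rfl)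
  have hdisj : Disjoint (Ioc (0:ℝ) α) (Ioo α 1) :=
    Set.disjoint_left.mpr fun x hx1 hx2 => absurd hx1.2 (not_le.mpr hx2.1)
  have hsplit : ∫ θ in Ioo (0:ℝ) 1, max (lowerQuantile P Z θ - c) 0
      = (∫ θ in Ioc (0:ℝ) α, max (lowerQuantile P Z θ - c) 0)
        + ∫ θ in Ioo α 1, max (lowerQuantile P Z θ - c) 0 := by
    rw [← Set.Ioc_union_Ioo_eq_Ioo hα.1.le hα.2]
    exact setIntegral_union hdisj measurableSet_Ioo hgIoc hgIoo
  have hIoc : ∫ θ in Ioc (0:ℝ) α, max (lowerQuantile P Z θ - c) 0 = 0 := by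
    rw [setIntegral_congr_fun measurableSet_Ioc (g := fun _ => (0:ℝ))
      (fun θ hθ => max_eq_right (sub_nonpos.mpr (quantile_mono hZ0 hθ.1 hθ.2 hα.2)))]
    exact integral_zero _ _
  have hIoo : ∫ θ in Ioo α 1, max (lowerQuantile P Z θ - c) 0
      = (∫ θ in Ioo α 1, lowerQuantile P Z θ) - (1 - α) * c := by
    rw [setIntegral_congr_fun measurableSet_Ioo
      (g := fun θ => lowerQuantile P Z θ - c)
      (fun θ hθ => max_eq_left (sub_nonneg.mpr (quantile_mono hZ0 hα.1 hθ.1.le hθ.2))),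
      integral_sub (quantile_integrableOn hm hZ0 hint hα) (integrable_const c),
      setIntegral_const,
      Real.volume_real_Ioo_of_le (by linarith [hα.2] : α ≤ 1), smul_eq_mul]
  have hkey := key_integral hm hZ0 hint c
  rw [hsplit, hIoc, hIoo] at hkey
  linarith

lemma tail_core {A B : Ω → ℝ} (hmA : Measurable A) (hA0 : ∀ ω, 0 ≤ A ω)
    (hAint : Integrable A P) (hmB : Measurable B) (hB0 : ∀ ω, 0 ≤ B ω)
    (hBint : Integrable B P) {l : ℝ} (hl0 : 0 ≤ l) (hl1 : l ≤ 1)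
    {α : ℝ} (hα : α ∈ Ioo (0:ℝ) 1) :
    ∫ θ in Ioo α 1, lowerQuantile P (fun ω => l * A ω + (1 - l) * B ω) θ
      ≤ l * (∫ θ in Ioo α 1, lowerQuantile P A θ)
        + (1 - l) * (∫ θ in Ioo α 1, lowerQuantile P B θ) := by
  have hl0' : (0:ℝ) ≤ 1 - l := by linarith
  set D := fun ω => l * A ω + (1 - l) * B ω with hD
  have hmD : Measurable D := (hmA.const_mul l).add (hmB.const_mul (1 - l))
  have hD0 : ∀ ω, 0 ≤ D ω := fun ω => by
    have := hA0 ω; have := hB0 ω; simp only [hD]; positivity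
  have hDint : Integrable D P := (hAint.const_mul l).add (hBint.const_mul (1 - l))
  set cA := lowerQuantile P A α with hcA
  set cB := lowerQuantile P B α with hcB
  set c := l * cA + (1 - l) * cB with hcdef
  have hup := quantile_upper hmD hD0 hDint hα c
  have hlowA := quantile_lower hmA hA0 hAint hα
  have hlowB := quantile_lower hmB hB0 hBint hα
  have hptwise : ∀ ω, max (D ω - c) 0
      ≤ l * max (A ω - cA) 0 + (1 - l) * max (B ω - cB) 0 := by
    intro ω
    have : D ω - c = l * (A ω - cA) + (1 - l) * (B ω - cB) := by
      simp only [hD, hcdef]; ring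
    rw [this]
    exact max_convex hl0 hl1
  have hintL : Integrable (fun ω => max (D ω - c) 0) P :=
    (hDint.sub (integrable_const c)).pos_part
  have hintA : Integrable (fun ω => max (A ω - cA) 0) P :=
    (hAint.sub (integrable_const cA)).pos_part
  have hintB : Integrable (fun ω => max (B ω - cB) 0) P :=
    (hBint.sub (integrable_const cB)).pos_part
  have hEmid : ∫ ω, max (D ω - c) 0 ∂P
      ≤ l * (∫ ω, max (A ω - cA) 0 ∂P) + (1 - l) * ∫ ω, max (B ω - cB) 0 ∂P := by
    calc ∫ ω, max (D ω - c) 0 ∂P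
        ≤ ∫ ω, (l * max (A ω - cA) 0 + (1 - l) * max (B ω - cB) 0) ∂P :=
          integral_mono hintL ((hintA.const_mul l).add (hintB.const_mul (1 - l))) hptwise
      _ = l * (∫ ω, max (A ω - cA) 0 ∂P) + (1 - l) * ∫ ω, max (B ω - cB) 0 ∂P := by
          rw [integral_add (hintA.const_mul l) (hintB.const_mul (1 - l)),
            integral_const_mul, integral_const_mul]
  have h1 : (1 - α) * c = l * ((1 - α) * cA) + (1 - l) * ((1 - α) * cB) := by ring
  have h2 := mul_le_mul_of_nonneg_left hlowA hl0
  have h3 := mul_le_mul_of_nonneg_left hlowB hl0'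
  rw [mul_add] at h2 h3
  rw [← hcA] at h2
  rw [← hcB] at h3
  linarith

end Core

theorem CED_convex {Ω : Type*} [MeasurableSpace Ω] (P : Measure Ω)
    [IsProbabilityMeasure P] {n : ℕ} (X Y : Ω → Fin n → ℝ)
    (hX : Integrable (fun ω => mdd (X ω)) P)
    (hY : Integrable (fun ω => mdd (Y ω)) P)
    (l : ℝ) (hl : l ∈ Set.Icc (0:ℝ) 1) (α : ℝ) (hα : α ∈ Set.Ioo (0:ℝ) 1) :
    CED P (fun ω => l • X ω + (1 - l) • Y ω) α
      ≤ l * CED P X α + (1 - l) * CED P Y α := by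
  obtain ⟨hl0, hl1⟩ := hl
  have hl0' : (0:ℝ) ≤ 1 - l := by linarith
  obtain ⟨A₀, hA₀sm, hA₀e⟩ := hX.1
  obtain ⟨B₀, hB₀sm, hB₀e⟩ := hY.1
  set A' := fun ω => max (A₀ ω) 0 with hA'def
  set B' := fun ω => max (B₀ ω) 0 with hB'def
  have hA'm : Measurable A' := hA₀sm.measurable.max measurable_const
  have hB'm : Measurable B' := hB₀sm.measurable.max measurable_const
  have hA'e : (fun ω => mdd (X ω)) =ᵐ[P] A' := by
    filter_upwards [hA₀e] with ω h
    simp only [hA'def, ← h]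
    exact (max_eq_left (mdd_nonneg _)).symm
  have hB'e : (fun ω => mdd (Y ω)) =ᵐ[P] B' := by
    filter_upwards [hB₀e] with ω h
    simp only [hB'def, ← h]
    exact (max_eq_left (mdd_nonneg _)).symm
  have hA'0 : ∀ ω, 0 ≤ A' ω := fun ω => le_max_right _ _
  have hB'0 : ∀ ω, 0 ≤ B' ω := fun ω => le_max_right _ _
  have hA'int : Integrable A' P := hX.congr hA'e
  have hB'int : Integrable B' P := hY.congr hB'e
  set D := fun ω => l * A' ω + (1 - l) * B' ω with hDdef
  have hD0 : ∀ ω, 0 ≤ D ω := fun ω => by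
    have := hA'0 ω; have := hB'0 ω; simp only [hDdef]; positivity
  have hmD : Measurable D := (hA'm.const_mul l).add (hB'm.const_mul (1 - l))
  have hDint : Integrable D P := (hA'int.const_mul l).add (hB'int.const_mul (1 - l))
  set C := fun ω => mdd (l • X ω + (1 - l) • Y ω) with hCdef
  have hC0 : ∀ ω, 0 ≤ C ω := fun ω => mdd_nonneg _
  -- C ≤ D almost everywhere
  have hCD : ∀ᵐ ω ∂P, C ω ≤ D ω := by
    filter_upwards [hA'e, hB'e] with ω h1 h2
    calc C ω ≤ l * mdd (X ω) + (1 - l) * mdd (Y ω) := mdd_convex _ _ hl0 hl1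
      _ = D ω := by rw [h1, h2]
  -- CDF comparison
  have hF : ∀ x, (P {ω | D ω ≤ x}).toReal ≤ (P {ω | C ω ≤ x}).toReal := by
    intro x
    refine ENNReal.toReal_mono (measure_ne_top P _) (measure_mono_ae ?_)
    filter_upwards [hCD] with ω h hmem
    exact le_trans h hmem
  have hqCD : ∀ θ ∈ Ioo α 1, lowerQuantile P C θ ≤ lowerQuantile P D θ :=
    fun θ hθ => quantile_mono_comp hC0 hF (lt_trans hα.1 hθ.1) hθ.2
  have hqDint := quantile_integrableOn hmD hD0 hDint hα
  have hqCint : IntegrableOn (lowerQuantile P C) (Ioo α 1) volume := by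
    refine Integrable.mono' hqDint
      ((aemeasurable_restrict_of_monotoneOn measurableSet_Ioo
        ((quantile_monotoneOn hC0).mono (Ioo_subset_Ioo hα.1.le le_rfl))).aestronglyMeasurable)
      ?_
    refine (ae_restrict_iff' measurableSet_Ioo).mpr (ae_of_all _ fun θ hθ => ?_)
    rw [Real.norm_eq_abs, abs_of_nonneg (quantile_nonneg hC0 (lt_trans hα.1 hθ.1))]
    exact hqCD θ hθ
  have hICD : ∫ θ in Ioo α 1, lowerQuantile P C θ ≤ ∫ θ in Ioo α 1, lowerQuantile P D θ := by
    refine integral_mono_ae hqCint hqDint ?_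
    exact (ae_restrict_iff' measurableSet_Ioo).mpr (ae_of_all _ fun θ hθ => hqCD θ hθ)
  have hcore := tail_core hA'm hA'0 hA'int hB'm hB'0 hB'int hl0 hl1 hα
  -- rewrite goal
  have hqA : lowerQuantile P (fun ω => mdd (X ω)) = lowerQuantile P A' :=
    lowerQuantile_congr hA'e
  have hqB : lowerQuantile P (fun ω => mdd (Y ω)) = lowerQuantile P B' :=
    lowerQuantile_congr hB'e
  simp only [CED, tailMean]
  rw [hqA, hqB]
  rw [intervalIntegral.integral_of_le hα.2.le, intervalIntegral.integral_of_le hα.2.le,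
    intervalIntegral.integral_of_le hα.2.le,
    integral_Ioc_eq_integral_Ioo, integral_Ioc_eq_integral_Ioo, integral_Ioc_eq_integral_Ioo]
  have hfinal : ∫ θ in Ioo α 1, lowerQuantile P C θ
      ≤ l * (∫ θ in Ioo α 1, lowerQuantile P A' θ)
        + (1 - l) * (∫ θ in Ioo α 1, lowerQuantile P B' θ) := le_trans hICD hcore
  calc (1 - α)⁻¹ * ∫ θ in Ioo α 1, lowerQuantile P C θ
      ≤ (1 - α)⁻¹ * (l * (∫ θ in Ioo α 1, lowerQuantile P A' θ)
        + (1 - l) * (∫ θ in Ioo α 1, lowerQuantile P B' θ)) :=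
        mul_le_mul_of_nonneg_left hfinal (inv_nonneg.mpr (by linarith [hα.2]))
    _ = l * ((1 - α)⁻¹ * ∫ θ in Ioo α 1, lowerQuantile P A' θ)
        + (1 - l) * ((1 - α)⁻¹ * ∫ θ in Ioo α 1, lowerQuantile P B' θ) := by ring
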